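/- Let d ≥ 4 be an integer and α ∈ [5−d, 2). Define φ(r) = (ω_{d−1}/ω_d) ∫₀^π (r − cos θ)(sin θ)^{d−2} A(r,θ)^{α−2} dθ, where A(r,θ) = √(1 + r² − 2r cos θ). Then r ↦ φ(r)/r is strictly decreasing on (0, ∞). -/

import Mathlib

open Real MeasureTheory Set intervalIntegral

/-- Surface area of the unit sphere in ℝ^m: ω_m = 2 π^{m/2} / Γ(m/2). -/
noncomputable def sphereArea (m : ℕ) : ℝ :=
  2 * Real.pi ^ ((m : ℝ) / 2) / Real.Gamma ((m : ℝ) / 2)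

noncomputable section AggrProof

/-- A² = 1 + r² - 2r cos θ -/
def Aq (r θ : ℝ) : ℝ := 1 + r ^ 2 - 2 * r * Real.cos θ

lemma aq_eq (r θ : ℝ) : Aq r θ = (r - Real.cos θ) ^ 2 + Real.sin θ ^ 2 := by
  have := Real.sin_sq_add_cos_sq θ
  unfold Aq; nlinarith [this]

lemma aq_nonneg (r θ : ℝ) : 0 ≤ Aq r θ := by
  rw [aq_eq]; positivity

lemma sin_le_sqrtAq (r θ : ℝ) (hs : 0 ≤ Real.sin θ) : Real.sin θ ≤ Real.sqrt (Aq r θ) := by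
  rw [show Real.sin θ = Real.sqrt (Real.sin θ ^ 2) by rw [Real.sqrt_sq hs]]
  apply Real.sqrt_le_sqrt; rw [aq_eq]; nlinarith [sq_nonneg (r - Real.cos θ)]

lemma abs_le_sqrtAq (r θ : ℝ) : |r - Real.cos θ| ≤ Real.sqrt (Aq r θ) := by
  rw [show |r - Real.cos θ| = Real.sqrt ((r - Real.cos θ) ^ 2) by rw [Real.sqrt_sq_eq_abs]]
  apply Real.sqrt_le_sqrt; rw [aq_eq]; nlinarith [sq_nonneg (Real.sin θ)]

lemma aq_pos_of_mem (r : ℝ) (hr : 0 < r) {θ : ℝ} (hθ : θ ∈ Set.Ioc 0 π) : 0 < Aq r θ := by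
  rcases lt_or_eq_of_le hθ.2 with h | h
  · have hs : 0 < Real.sin θ := Real.sin_pos_of_pos_of_lt_pi hθ.1 h
    rw [aq_eq]; nlinarith [sq_nonneg (r - Real.cos θ)]
  · rw [aq_eq, h]; simp [Real.sin_pi, Real.cos_pi]; nlinarith

lemma aq_pos_of_lt_one {r : ℝ} (hr : 0 < r) (hr1 : r < 1) (θ : ℝ) : 0 < Aq r θ := by
  have h1 : Real.cos θ ≤ 1 := Real.cos_le_one θ
  have : Aq r θ = (1 - r) ^ 2 + 2 * r * (1 - Real.cos θ) := by unfold Aq; ring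
  rw [this]; nlinarith

lemma sqrtAq_pos_of_mem (r : ℝ) (hr : 0 < r) {θ : ℝ} (hθ : θ ∈ Set.Ioc 0 π) :
    0 < Real.sqrt (Aq r θ) := Real.sqrt_pos.2 (aq_pos_of_mem r hr hθ)

/-- basic bound: s^k * A^c ≤ 1 -/
lemma pow_mul_rpow_le_one {s A c : ℝ} {k : ℕ} (hk : 1 ≤ k) (hs0 : 0 ≤ s) (hs1 : s ≤ 1)
    (hsA : s ≤ A) (hc : c ≤ 0) (hkc : 0 ≤ (k : ℝ) + c) : s ^ k * A ^ c ≤ 1 := by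
  rcases eq_or_lt_of_le hs0 with h | h
  · rw [← h, zero_pow (by omega), zero_mul]; norm_num
  · have hA : 0 < A := lt_of_lt_of_le h hsA
    have h1 : A ^ c ≤ s ^ c := Real.rpow_le_rpow_of_nonpos h hsA hc
    have h2 : s ^ k * A ^ c ≤ s ^ k * s ^ c :=
      mul_le_mul_of_nonneg_left h1 (pow_nonneg hs0 k)
    refine h2.trans ?_
    rw [← Real.rpow_natCast s k, ← Real.rpow_add h]
    exact Real.rpow_le_one hs0 hs1 hkc



def Xf (d : ℕ) (α r θ : ℝ) : ℝ :=
  (r - Real.cos θ) * Real.sin θ ^ (d - 2) * Real.sqrt (Aq r θ) ^ (α - 2)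

def Psif (d : ℕ) (α r θ : ℝ) : ℝ :=
  Real.sin θ ^ (d - 2) * Real.sqrt (Aq r θ) ^ (α - 4) *
    ((r - Real.cos θ) ^ 2 + (((d : ℝ) + α - 3) / ((d : ℝ) - 1)) * Real.sin θ ^ 2)

def Nf (d : ℕ) (α r θ : ℝ) : ℝ :=
  Real.sin θ ^ (d - 2) * Real.sqrt (Aq r θ) ^ (α - 6) * (r - Real.cos θ) *
    ((r - Real.cos θ) ^ 2 + (((d : ℝ) + α - 5) / ((d : ℝ) - 1)) * Real.sin θ ^ 2)

def PsiI (d : ℕ) (α r : ℝ) : ℝ := ∫ θ in (0:ℝ)..π, Psif d α r θ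

def NI (d : ℕ) (α r : ℝ) : ℝ := ∫ θ in (0:ℝ)..π, Nf d α r θ

lemma meas_aux (c : ℝ) (r : ℝ) : Measurable fun θ => Real.sqrt (Aq r θ) ^ c := by
  have h : Measurable fun θ => Aq r θ := by
    unfold Aq; fun_prop
  exact (h.sqrt).pow_const _

lemma xf_meas (d : ℕ) (α r : ℝ) : Measurable (Xf d α r) := by
  unfold Xf
  exact ((measurable_const.sub Real.measurable_cos).mul
    (Real.measurable_sin.pow measurable_const)).mul (meas_aux (α - 2) r)

lemma psif_meas (d : ℕ) (α r : ℝ) : Measurable (Psif d α r) := by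
  unfold Psif
  apply Measurable.mul
  · exact (Real.measurable_sin.pow measurable_const).mul (meas_aux (α - 4) r)
  · exact ((measurable_const.sub Real.measurable_cos).pow measurable_const).add
      (measurable_const.mul (Real.measurable_sin.pow measurable_const))

lemma nf_meas (d : ℕ) (α r : ℝ) : Measurable (Nf d α r) := by
  unfold Nf
  apply Measurable.mul
  · exact (((Real.measurable_sin.pow measurable_const).mul (meas_aux (α - 6) r)).mul
      (measurable_const.sub Real.measurable_cos))
  · exact ((measurable_const.sub Real.measurable_cos).pow measurable_const).add
      (measurable_const.mul (Real.measurable_sin.pow measurable_const))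

/-- integrability from an a.e. (on uIoc) bound -/
lemma intervalIntegrable_of_bound (f : ℝ → ℝ) (hm : Measurable f) (Cb : ℝ)
    (hb : ∀ θ ∈ Set.uIoc (0:ℝ) π, ‖f θ‖ ≤ Cb) : IntervalIntegrable f volume 0 π := by
  apply (_root_.intervalIntegrable_const (c := Cb)).mono_fun' hm.aestronglyMeasurable
  · filter_upwards [ae_restrict_mem measurableSet_uIoc] with θ hθ
    simpa using hb θ hθ

section Bounds

variable {d : ℕ} {α : ℝ}

lemma rpow_shift2 {A : ℝ} (hA : 0 < A) (c : ℝ) : A ^ c * A ^ (2:ℕ) = A ^ (c + 2) := by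
  rw [← Real.rpow_natCast A 2, ← Real.rpow_add hA]; norm_num

lemma rpow_merge {P : ℝ} (h0 : 0 ≤ P) (hP : 0 < P) (c : ℝ) :
    Real.sqrt P ^ c * P = Real.sqrt P ^ (c + 2) := by
  rw [← rpow_shift2 (Real.sqrt_pos.2 hP) c]
  congr 1
  exact (Real.sq_sqrt h0).symm

lemma rpow_shift1 {A : ℝ} (hA : 0 < A) (c : ℝ) : A ^ c * A = A ^ (c + 1) :=
  (Real.rpow_add_one hA.ne' c).symm

lemma basic_facts (r : ℝ) (hr : 0 < r) {θ : ℝ} (hθ : θ ∈ Set.uIoc (0:ℝ) π) :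
    0 ≤ Real.sin θ ∧ Real.sin θ ≤ 1 ∧ Real.sin θ ≤ Real.sqrt (Aq r θ) ∧
      0 < Real.sqrt (Aq r θ) ∧ |r - Real.cos θ| ≤ Real.sqrt (Aq r θ) := by
  rw [Set.uIoc_of_le Real.pi_pos.le] at hθ
  have hs0 : 0 ≤ Real.sin θ := Real.sin_nonneg_of_nonneg_of_le_pi hθ.1.le hθ.2
  exact ⟨hs0, Real.sin_le_one θ, sin_le_sqrtAq r θ hs0, sqrtAq_pos_of_mem r hr hθ,
    abs_le_sqrtAq r θ⟩

lemma xf_bound (hd : 4 ≤ d) (hα1 : 5 - (d:ℝ) ≤ α) (hα2 : α < 2) {r : ℝ} (hr : 0 < r)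
    {θ : ℝ} (hθ : θ ∈ Set.uIoc (0:ℝ) π) : ‖Xf d α r θ‖ ≤ r + 1 := by
  obtain ⟨hs0, hs1, hsA, hA, habs⟩ := basic_facts r hr hθ
  have hd4 : (4:ℝ) ≤ (d:ℝ) := by exact_mod_cast hd
  have h1 : ‖Xf d α r θ‖ = |r - Real.cos θ| * (Real.sin θ ^ (d-2) * Real.sqrt (Aq r θ) ^ (α-2)) := by
    unfold Xf
    rw [Real.norm_eq_abs, abs_mul, abs_mul, mul_assoc,
      abs_of_nonneg (pow_nonneg hs0 (d-2)),
      abs_of_nonneg (Real.rpow_nonneg (Real.sqrt_nonneg _) _)]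
  rw [h1]
  have h2 : Real.sin θ ^ (d-2) * Real.sqrt (Aq r θ) ^ (α-2) ≤ 1 :=
    pow_mul_rpow_le_one (by omega) hs0 hs1 hsA (by linarith) (by
      have : ((d-2 : ℕ) : ℝ) = (d:ℝ) - 2 := by
        have : (2:ℕ) ≤ d := by omega
        push_cast [this]; ring
      rw [this]; linarith)
  have h3 : |r - Real.cos θ| ≤ r + 1 := by
    have := Real.neg_one_le_cos θ
    have := Real.cos_le_one θ
    rw [abs_le]; constructor <;> nlinarith
  calc |r - Real.cos θ| * (Real.sin θ ^ (d-2) * Real.sqrt (Aq r θ) ^ (α-2))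
      ≤ (r+1) * 1 := mul_le_mul h3 h2 (by positivity) (by linarith)
    _ = r + 1 := by ring


lemma quad_bound {κ r θ : ℝ} (hκ : 0 ≤ κ) :
    (r - Real.cos θ) ^ 2 + κ * Real.sin θ ^ 2 ≤ (1 + κ) * Aq r θ := by
  have h := aq_eq r θ
  nlinarith [sq_nonneg (r - Real.cos θ), sq_nonneg (Real.sin θ)]

lemma hkap_nonneg (hd : 4 ≤ d) (hα1 : 5 - (d:ℝ) ≤ α) : 0 ≤ ((d:ℝ) + α - 3) / ((d:ℝ) - 1) := by
  have hd4 : (4:ℝ) ≤ (d:ℝ) := by exact_mod_cast hd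
  apply div_nonneg <;> linarith

lemma hkap2_nonneg (hd : 4 ≤ d) (hα1 : 5 - (d:ℝ) ≤ α) : 0 ≤ ((d:ℝ) + α - 5) / ((d:ℝ) - 1) := by
  have hd4 : (4:ℝ) ≤ (d:ℝ) := by exact_mod_cast hd
  apply div_nonneg <;> linarith

lemma cast_dsub (hd : 4 ≤ d) {k : ℕ} (hk : k ≤ 4) : ((d - k : ℕ) : ℝ) = (d:ℝ) - k := by
  have : k ≤ d := by omega
  push_cast [this]; ring

lemma psif_bound (hd : 4 ≤ d) (hα1 : 5 - (d:ℝ) ≤ α) (hα2 : α < 2) {r : ℝ} (hr : 0 < r)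
    {θ : ℝ} (hθ : θ ∈ Set.uIoc (0:ℝ) π) :
    ‖Psif d α r θ‖ ≤ 1 + ((d:ℝ) + α - 3) / ((d:ℝ) - 1) := by
  obtain ⟨hs0, hs1, hsA, hA, habs⟩ := basic_facts r hr hθ
  have hd4 : (4:ℝ) ≤ (d:ℝ) := by exact_mod_cast hd
  set κ := ((d:ℝ) + α - 3) / ((d:ℝ) - 1) with hκdef
  have hκ : 0 ≤ κ := hkap_nonneg hd hα1
  have hQ0 : 0 ≤ (r - Real.cos θ) ^ 2 + κ * Real.sin θ ^ 2 := by positivity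
  have h1 : ‖Psif d α r θ‖ = Psif d α r θ := by
    rw [Real.norm_eq_abs, abs_of_nonneg]
    unfold Psif
    have := Real.rpow_nonneg (Real.sqrt_nonneg (Aq r θ)) (α - 4)
    positivity
  rw [h1]
  unfold Psif
  calc Real.sin θ ^ (d-2) * Real.sqrt (Aq r θ) ^ (α-4) *
        ((r - Real.cos θ) ^ 2 + κ * Real.sin θ ^ 2)
      ≤ Real.sin θ ^ (d-2) * Real.sqrt (Aq r θ) ^ (α-4) * ((1 + κ) * Aq r θ) := by
        apply mul_le_mul_of_nonneg_left (quad_bound hκ)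
        have := Real.rpow_nonneg (Real.sqrt_nonneg (Aq r θ)) (α - 4)
        positivity
    _ = (1 + κ) * (Real.sin θ ^ (d-2) * Real.sqrt (Aq r θ) ^ (α-2)) := by
        have hP : 0 < Aq r θ := Real.sqrt_pos.1 hA
        rw [show Real.sin θ ^ (d-2) * Real.sqrt (Aq r θ) ^ (α-4) * ((1 + κ) * Aq r θ)
            = (1 + κ) * (Real.sin θ ^ (d-2) * (Real.sqrt (Aq r θ) ^ (α-4) * Aq r θ)) by ring,
          rpow_merge (aq_nonneg r θ) hP, show α - 4 + 2 = α - 2 by ring]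
    _ ≤ (1 + κ) * 1 := by
        apply mul_le_mul_of_nonneg_left _ (by linarith)
        apply pow_mul_rpow_le_one (by omega) hs0 hs1 hsA (by linarith)
        rw [cast_dsub hd (by norm_num)]; push_cast; linarith
    _ = 1 + κ := by ring

lemma nf_bound (hd : 4 ≤ d) (hα1 : 5 - (d:ℝ) ≤ α) (hα2 : α < 2) {r : ℝ} (hr : 0 < r)
    {θ : ℝ} (hθ : θ ∈ Set.uIoc (0:ℝ) π) :
    ‖Nf d α r θ‖ ≤ 1 + ((d:ℝ) + α - 5) / ((d:ℝ) - 1) := by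
  obtain ⟨hs0, hs1, hsA, hA, habs⟩ := basic_facts r hr hθ
  have hd4 : (4:ℝ) ≤ (d:ℝ) := by exact_mod_cast hd
  set κ := ((d:ℝ) + α - 5) / ((d:ℝ) - 1) with hκdef
  have hκ : 0 ≤ κ := hkap2_nonneg hd hα1
  have hQ0 : 0 ≤ (r - Real.cos θ) ^ 2 + κ * Real.sin θ ^ 2 := by positivity
  have hA4 : (0:ℝ) ≤ Real.sqrt (Aq r θ) ^ (α - 6) :=
    Real.rpow_nonneg (Real.sqrt_nonneg _) _
  have h1 : ‖Nf d α r θ‖ = Real.sin θ ^ (d-2) * Real.sqrt (Aq r θ) ^ (α-6) * |r - Real.cos θ| *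
      ((r - Real.cos θ) ^ 2 + κ * Real.sin θ ^ 2) := by
    unfold Nf
    rw [Real.norm_eq_abs, abs_mul, abs_mul, abs_mul]
    rw [abs_of_nonneg (pow_nonneg hs0 (d-2)), abs_of_nonneg hA4, abs_of_nonneg hQ0]
  rw [h1]
  calc Real.sin θ ^ (d-2) * Real.sqrt (Aq r θ) ^ (α-6) * |r - Real.cos θ| *
        ((r - Real.cos θ) ^ 2 + κ * Real.sin θ ^ 2)
      ≤ Real.sin θ ^ (d-2) * Real.sqrt (Aq r θ) ^ (α-6) * Real.sqrt (Aq r θ) *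
        ((1 + κ) * Aq r θ) := by
        apply mul_le_mul
        · exact mul_le_mul_of_nonneg_left habs (by positivity)
        · exact quad_bound hκ
        · exact hQ0
        · positivity
    _ = (1 + κ) * (Real.sin θ ^ (d-2) * Real.sqrt (Aq r θ) ^ (α-3)) := by
        have hP : 0 < Aq r θ := Real.sqrt_pos.1 hA
        rw [show Real.sin θ ^ (d-2) * Real.sqrt (Aq r θ) ^ (α-6) * Real.sqrt (Aq r θ) *
            ((1 + κ) * Aq r θ)
            = (1 + κ) * (Real.sin θ ^ (d-2) * (Real.sqrt (Aq r θ) ^ (α-6) * Real.sqrt (Aq r θ)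
              * Aq r θ)) by ring,
          rpow_shift1 hA (α-6), rpow_merge (aq_nonneg r θ) hP,
          show α - 6 + 1 + 2 = α - 3 by ring]
    _ ≤ (1 + κ) * 1 := by
        apply mul_le_mul_of_nonneg_left _ (by linarith)
        apply pow_mul_rpow_le_one (by omega) hs0 hs1 hsA (by linarith)
        rw [cast_dsub hd (by norm_num)]; push_cast; linarith
    _ = 1 + κ := by ring

lemma xf_int (hd : 4 ≤ d) (hα1 : 5 - (d:ℝ) ≤ α) (hα2 : α < 2) {r : ℝ} (hr : 0 < r) :
    IntervalIntegrable (Xf d α r) volume 0 π :=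
  intervalIntegrable_of_bound _ (xf_meas d α r) _ (fun _ h => xf_bound hd hα1 hα2 hr h)

lemma psif_int (hd : 4 ≤ d) (hα1 : 5 - (d:ℝ) ≤ α) (hα2 : α < 2) {r : ℝ} (hr : 0 < r) :
    IntervalIntegrable (Psif d α r) volume 0 π :=
  intervalIntegrable_of_bound _ (psif_meas d α r) _ (fun _ h => psif_bound hd hα1 hα2 hr h)

lemma nf_int (hd : 4 ≤ d) (hα1 : 5 - (d:ℝ) ≤ α) (hα2 : α < 2) {r : ℝ} (hr : 0 < r) :
    IntervalIntegrable (Nf d α r) volume 0 π :=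
  intervalIntegrable_of_bound _ (nf_meas d α r) _ (fun _ h => nf_bound hd hα1 hα2 hr h)


end Bounds

section IBP

variable {d : ℕ} {α : ℝ}

/-- boundary function for integration by parts -/
def Gb (d : ℕ) (α r θ : ℝ) : ℝ := Real.sin θ ^ (d - 1) * Real.sqrt (Aq r θ) ^ (α - 2)

/-- its derivative (simplified form, valid where Aq > 0) -/
def Gb' (d : ℕ) (α r θ : ℝ) : ℝ :=
  Real.sin θ ^ (d - 2) * (((d:ℝ) - 1) * Real.cos θ * Real.sqrt (Aq r θ) ^ (α - 2)
    + (α - 2) * r * Real.sin θ ^ 2 * Real.sqrt (Aq r θ) ^ (α - 4))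

lemma hasDerivAt_aq (r θ : ℝ) : HasDerivAt (fun θ => Aq r θ) (2 * r * Real.sin θ) θ := by
  have h := ((Real.hasDerivAt_cos θ).const_mul (2 * r)).const_sub (1 + r ^ 2)
  have h2 : -(2 * r * -Real.sin θ) = 2 * r * Real.sin θ := by ring
  rw [h2] at h
  exact h

lemma hasDerivAt_sqrtAq {r θ : ℝ} (h : 0 < Aq r θ) :
    HasDerivAt (fun θ => Real.sqrt (Aq r θ))
      (1 / (2 * Real.sqrt (Aq r θ)) * (2 * r * Real.sin θ)) θ :=
  (Real.hasDerivAt_sqrt h.ne').comp θ (hasDerivAt_aq r θ)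

lemma hasDerivAt_gb (hd : 4 ≤ d) {r θ : ℝ} (hr : 0 < r) (h : 0 < Aq r θ) :
    HasDerivAt (Gb d α r) (Gb' d α r θ) θ := by
  have hA : 0 < Real.sqrt (Aq r θ) := Real.sqrt_pos.2 h
  have h2 : HasDerivAt (fun θ => Real.sqrt (Aq r θ) ^ (α - 2))
      ((α - 2) * Real.sqrt (Aq r θ) ^ (α - 2 - 1) *
        (1 / (2 * Real.sqrt (Aq r θ)) * (2 * r * Real.sin θ))) θ :=
    by have := (Real.hasDerivAt_rpow_const (p := α - 2) (Or.inl hA.ne')).comp θ (hasDerivAt_sqrtAq h); exact this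
  have h3 : HasDerivAt (fun θ => Real.sin θ ^ (d - 1))
      ((((d:ℕ) - 1 : ℕ) : ℝ) * Real.sin θ ^ (d - 1 - 1) * Real.cos θ) θ :=
    (hasDerivAt_pow (d - 1) (Real.sin θ)).comp θ (Real.hasDerivAt_sin θ)
  have h4 : HasDerivAt (Gb d α r) _ θ :=
    h3.fun_mul h2
  convert h4 using 1
  unfold Gb'
  rw [show d - 1 - 1 = d - 2 by omega, cast_dsub hd (by norm_num),
    show α - 2 - 1 = α - 3 by ring,
    show Real.sqrt (Aq r θ) ^ (α - 3) = Real.sqrt (Aq r θ) ^ (α - 4) * Real.sqrt (Aq r θ) from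
      by rw [rpow_shift1 hA]; congr 1; ring,
    show d - 1 = (d - 2) + 1 by omega, pow_succ]
  push_cast
  field_simp
  ring

lemma gb_cont (hd : 4 ≤ d) (hα1 : 5 - (d:ℝ) ≤ α) (hα2 : α < 2) {r : ℝ} (hr : 0 < r) :
    ContinuousOn (Gb d α r) (Set.Icc 0 π) := by
  have hd4 : (4:ℝ) ≤ (d:ℝ) := by exact_mod_cast hd
  intro θ hθ
  by_cases hP : Aq r θ = 0
  · -- singular point : θ = 0, r = 1
    have he := aq_eq r θ
    have hsin : Real.sin θ = 0 := by nlinarith [sq_nonneg (r - Real.cos θ), sq_nonneg (Real.sin θ)]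
    have hcos : r = Real.cos θ := by nlinarith [sq_nonneg (r - Real.cos θ), sq_nonneg (Real.sin θ)]
    have hθ0 : θ = 0 := by
      rcases eq_or_lt_of_le hθ.1 with h0 | h0
      · exact h0.symm
      rcases eq_or_lt_of_le hθ.2 with h1 | h1
      · exfalso; rw [h1] at hcos; rw [Real.cos_pi] at hcos; linarith
      · exact absurd hsin (ne_of_gt (Real.sin_pos_of_pos_of_lt_pi h0 h1))
    subst hθ0
    -- squeeze: ‖Gb‖ ≤ sin θ near 0 within Icc
    have hGb0 : Gb d α r 0 = 0 := by
      unfold Gb; rw [Real.sin_zero, zero_pow (by omega : d - 1 ≠ 0), zero_mul]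
    unfold ContinuousWithinAt
    rw [hGb0]
    apply squeeze_zero_norm' (a := Real.sin)
    · filter_upwards [eventually_mem_nhdsWithin] with x hx
      have hs0 : 0 ≤ Real.sin x := Real.sin_nonneg_of_nonneg_of_le_pi hx.1 hx.2
      have hsA : Real.sin x ≤ Real.sqrt (Aq r x) := sin_le_sqrtAq r x hs0
      have hb : Real.sin x ^ (d - 2) * Real.sqrt (Aq r x) ^ (α - 2) ≤ 1 := by
        apply pow_mul_rpow_le_one (by omega) hs0 (Real.sin_le_one x) hsA (by linarith)
        rw [cast_dsub hd (by norm_num)]; push_cast; linarith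
      have hnn : 0 ≤ Real.sqrt (Aq r x) ^ (α - 2) := Real.rpow_nonneg (Real.sqrt_nonneg _) _
      have : ‖Gb d α r x‖ = Real.sin x ^ (d - 1) * Real.sqrt (Aq r x) ^ (α - 2) := by
        unfold Gb
        rw [Real.norm_eq_abs, abs_mul, abs_of_nonneg (pow_nonneg hs0 _), abs_of_nonneg hnn]
      rw [this, show d - 1 = (d - 2) + 1 by omega, pow_succ]
      calc Real.sin x ^ (d - 2) * Real.sin x * Real.sqrt (Aq r x) ^ (α - 2)
          = Real.sin x * (Real.sin x ^ (d - 2) * Real.sqrt (Aq r x) ^ (α - 2)) := by ring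
        _ ≤ Real.sin x * 1 := by
            apply mul_le_mul_of_nonneg_left hb hs0
        _ = Real.sin x := by ring
    · have h := Real.continuous_sin.continuousWithinAt (s := Set.Icc 0 π) (x := (0:ℝ))
      unfold ContinuousWithinAt at h
      rwa [Real.sin_zero] at h
  · -- regular point
    have hApos : 0 < Aq r θ := lt_of_le_of_ne (aq_nonneg r θ) (Ne.symm hP)
    apply ContinuousAt.continuousWithinAt
    apply ContinuousAt.mul
    · exact (Real.continuous_sin.continuousAt).pow _
    · apply ContinuousAt.rpow_const
      · exact (Real.continuous_sqrt.continuousAt).comp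
          (by unfold Aq; fun_prop)
      · left; exact (Real.sqrt_pos.2 hApos).ne'

lemma gb'_meas (d : ℕ) (α r : ℝ) : Measurable (Gb' d α r) := by
  unfold Gb'
  have h : Measurable fun θ => Aq r θ := by unfold Aq; fun_prop
  apply (Real.measurable_sin.pow measurable_const).mul
  apply Measurable.add
  · exact ((measurable_const.mul Real.measurable_cos)).mul ((h.sqrt).pow_const _)
  · exact ((measurable_const.mul (Real.measurable_sin.pow measurable_const))).mul
      ((h.sqrt).pow_const _)

lemma gb'_bound (hd : 4 ≤ d) (hα1 : 5 - (d:ℝ) ≤ α) (hα2 : α < 2) {r : ℝ} (hr : 0 < r)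
    {θ : ℝ} (hθ : θ ∈ Set.uIoc (0:ℝ) π) :
    ‖Gb' d α r θ‖ ≤ ((d:ℝ) - 1) + (2 - α) * r := by
  obtain ⟨hs0, hs1, hsA, hA, habs⟩ := basic_facts r hr hθ
  have hd4 : (4:ℝ) ≤ (d:ℝ) := by exact_mod_cast hd
  have h1 : ‖Gb' d α r θ‖ ≤ Real.sin θ ^ (d-2) * (((d:ℝ)-1) * |Real.cos θ| *
      Real.sqrt (Aq r θ) ^ (α-2)) + Real.sin θ ^ (d-2) * ((2-α) * r * Real.sin θ ^ 2 *
      Real.sqrt (Aq r θ) ^ (α-4)) := by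
    unfold Gb'
    rw [Real.norm_eq_abs, mul_add]
    refine (abs_add_le _ _).trans (add_le_add ?_ ?_)
    · rw [abs_mul, abs_of_nonneg (pow_nonneg hs0 (d-2)), abs_mul, abs_mul,
        abs_of_nonneg (show (0:ℝ) ≤ (d:ℝ)-1 by linarith),
        abs_of_nonneg (Real.rpow_nonneg (Real.sqrt_nonneg _) _)]
    · rw [abs_mul, abs_of_nonneg (pow_nonneg hs0 (d-2)), abs_mul, abs_mul, abs_mul,
        abs_of_nonpos (show α - 2 ≤ 0 by linarith), abs_of_nonneg hr.le,
        abs_of_nonneg (sq_nonneg (Real.sin θ)),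
        abs_of_nonneg (Real.rpow_nonneg (Real.sqrt_nonneg _) _)]
      apply le_of_eq; ring
  refine h1.trans ?_
  apply add_le_add
  · calc Real.sin θ ^ (d-2) * (((d:ℝ)-1) * |Real.cos θ| * Real.sqrt (Aq r θ) ^ (α-2))
        = ((d:ℝ)-1) * |Real.cos θ| * (Real.sin θ ^ (d-2) * Real.sqrt (Aq r θ) ^ (α-2)) := by ring
      _ ≤ ((d:ℝ)-1) * 1 * 1 := by
          apply mul_le_mul
          · apply mul_le_mul_of_nonneg_left (abs_cos_le_one θ) (by linarith)
          · apply pow_mul_rpow_le_one (by omega) hs0 hs1 hsA (by linarith)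
            rw [cast_dsub hd (by norm_num)]; push_cast; linarith
          · exact mul_nonneg (pow_nonneg hs0 _) (Real.rpow_nonneg (Real.sqrt_nonneg _) _)
          · nlinarith
      _ = (d:ℝ)-1 := by ring
  · calc Real.sin θ ^ (d-2) * ((2-α) * r * Real.sin θ ^ 2 * Real.sqrt (Aq r θ) ^ (α-4))
        = (2-α) * r * (Real.sin θ ^ d * Real.sqrt (Aq r θ) ^ (α-4)) := by
          have hpow : Real.sin θ ^ d = Real.sin θ ^ (d-2) * Real.sin θ ^ 2 := by
            rw [← pow_add]; congr 1; omega
          rw [hpow]; ring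
      _ ≤ (2-α) * r * 1 := by
          apply mul_le_mul_of_nonneg_left _ (by nlinarith)
          apply pow_mul_rpow_le_one (by omega) hs0 hs1 hsA (by linarith)
          push_cast; linarith
      _ = (2-α) * r := by ring

lemma gb'_int (hd : 4 ≤ d) (hα1 : 5 - (d:ℝ) ≤ α) (hα2 : α < 2) {r : ℝ} (hr : 0 < r) :
    IntervalIntegrable (Gb' d α r) volume 0 π :=
  intervalIntegrable_of_bound _ (gb'_meas d α r) _ (fun _ h => gb'_bound hd hα1 hα2 hr h)

lemma integral_gb'_eq_zero (hd : 4 ≤ d) (hα1 : 5 - (d:ℝ) ≤ α) (hα2 : α < 2) {r : ℝ}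
    (hr : 0 < r) : ∫ θ in (0:ℝ)..π, Gb' d α r θ = 0 := by
  have h := intervalIntegral.integral_eq_sub_of_hasDeriv_right_of_le Real.pi_pos.le
    (gb_cont hd hα1 hα2 hr)
    (fun θ hθ => ((hasDerivAt_gb hd hr (aq_pos_of_mem r hr ⟨hθ.1, hθ.2.le⟩)).hasDerivWithinAt))
    (gb'_int hd hα1 hα2 hr)
  rw [h]
  have h0 : Gb d α r 0 = 0 := by
    unfold Gb; rw [Real.sin_zero, zero_pow (by omega : d - 1 ≠ 0), zero_mul]
  have hpi : Gb d α r π = 0 := by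
    unfold Gb; rw [Real.sin_pi, zero_pow (by omega : d - 1 ≠ 0), zero_mul]
  rw [h0, hpi, sub_zero]

/-- the pointwise IBP identity -/
lemma ibp_pointwise (hd : 4 ≤ d) {r θ : ℝ} (hr : 0 < r) (h : 0 < Aq r θ) :
    ((d:ℝ) - 1) * (r * Psif d α r θ - Xf d α r θ) = Gb' d α r θ := by
  have hd4 : (4:ℝ) ≤ (d:ℝ) := by exact_mod_cast hd
  have hA : 0 < Real.sqrt (Aq r θ) := Real.sqrt_pos.2 h
  have hne : ((d:ℝ) - 1) ≠ 0 := by linarith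
  unfold Psif Xf Gb'
  rw [show α - 2 = α - 4 + 2 by ring, ← rpow_merge (aq_nonneg r θ) h (α - 4)]
  have he := aq_eq r θ
  field_simp
  linear_combination (-(((d:ℝ)-1) * r * Real.sin θ ^ (d-2))) * he

end IBP


section Deriv

variable {d : ℕ} {α : ℝ}

lemma xi_eq_r_psiI (hd : 4 ≤ d) (hα1 : 5 - (d:ℝ) ≤ α) (hα2 : α < 2) {r : ℝ} (hr : 0 < r) :
    (∫ θ in (0:ℝ)..π, Xf d α r θ) = r * PsiI d α r := by
  have hd4 : (4:ℝ) ≤ (d:ℝ) := by exact_mod_cast hd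
  have hne : ((d:ℝ) - 1) ≠ 0 := by linarith
  have h1 := psif_int hd hα1 hα2 hr
  have h2 := xf_int hd hα1 hα2 hr
  have key : ∫ θ in (0:ℝ)..π, (r * Psif d α r θ - Xf d α r θ) = 0 := by
    have hcong : ∀ᵐ θ ∂volume, θ ∈ Set.uIoc (0:ℝ) π →
        r * Psif d α r θ - Xf d α r θ = (1/((d:ℝ)-1)) * Gb' d α r θ := by
      apply Filter.Eventually.of_forall
      intro θ hθ
      have hpos : 0 < Aq r θ := aq_pos_of_mem r hr (by rwa [Set.uIoc_of_le Real.pi_pos.le] at hθ)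
      have h := ibp_pointwise hd hr hpos (α := α)
      field_simp
      linarith [h]
    rw [intervalIntegral.integral_congr_ae hcong, intervalIntegral.integral_const_mul,
      integral_gb'_eq_zero hd hα1 hα2 hr, mul_zero]
  have hsub : ∫ θ in (0:ℝ)..π, (r * Psif d α r θ - Xf d α r θ)
      = r * PsiI d α r - ∫ θ in (0:ℝ)..π, Xf d α r θ := by
    rw [intervalIntegral.integral_sub (h1.const_mul r) h2, intervalIntegral.integral_const_mul]
    rfl
  rw [hsub] at key
  linarith [key]

lemma hasDerivAt_psif (hd : 4 ≤ d) {x θ : ℝ} (h : 0 < Aq x θ) :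
    HasDerivAt (fun y => Psif d α y θ) ((α - 2) * Nf d α x θ) x := by
  have hd4 : (4:ℝ) ≤ (d:ℝ) := by exact_mod_cast hd
  have hne : ((d:ℝ) - 1) ≠ 0 := by linarith
  have hA : 0 < Real.sqrt (Aq x θ) := Real.sqrt_pos.2 h
  have h0 : HasDerivAt (fun y => Aq y θ) (2*x - 2*Real.cos θ) x := by
    have ha : HasDerivAt (fun y : ℝ => 1 + y ^ 2) ((2:ℕ) * x ^ (2-1)) x :=
      (hasDerivAt_pow 2 x).const_add 1
    have hb : HasDerivAt (fun y : ℝ => 2 * y * Real.cos θ) ((2 * 1) * Real.cos θ) x :=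
      ((hasDerivAt_id x).const_mul 2).mul_const (Real.cos θ)
    have hc := ha.sub hb
    have : ((2:ℕ):ℝ) * x ^ (2-1) - (2 * 1) * Real.cos θ = 2*x - 2*Real.cos θ := by
      push_cast; ring
    rw [this] at hc
    exact hc
  have h1 : HasDerivAt (fun y => Real.sqrt (Aq y θ))
      (1 / (2 * Real.sqrt (Aq x θ)) * (2*x - 2*Real.cos θ)) x :=
    (Real.hasDerivAt_sqrt h.ne').comp x h0
  have h2 : HasDerivAt (fun y => Real.sqrt (Aq y θ) ^ (α-4))
      ((α-4) * Real.sqrt (Aq x θ) ^ (α-4-1) *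
        (1 / (2 * Real.sqrt (Aq x θ)) * (2*x - 2*Real.cos θ))) x :=
    by have := (Real.hasDerivAt_rpow_const (p := α-4) (Or.inl hA.ne')).comp x h1; exact this
  have h4 : HasDerivAt (fun y => (y - Real.cos θ) ^ 2 +
      (((d:ℝ) + α - 3)/((d:ℝ)-1)) * Real.sin θ ^ 2)
      (((2:ℕ) * (x - Real.cos θ) ^ (2-1) * 1)) x := by
    exact (((hasDerivAt_id x).sub_const (Real.cos θ)).pow 2).add_const _
  have h5 : HasDerivAt (fun y => Real.sin θ ^ (d-2) * Real.sqrt (Aq y θ) ^ (α-4) *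
      ((y - Real.cos θ) ^ 2 + (((d:ℝ) + α - 3)/((d:ℝ)-1)) * Real.sin θ ^ 2)) _ x :=
    (h2.const_mul (Real.sin θ ^ (d-2))).fun_mul h4
  have hshape : (fun y => Real.sin θ ^ (d-2) * Real.sqrt (Aq y θ) ^ (α-4) *
      ((y - Real.cos θ) ^ 2 + (((d:ℝ) + α - 3)/((d:ℝ)-1)) * Real.sin θ ^ 2))
      = fun y => Psif d α y θ := by
    funext y; rfl
  rw [hshape] at h5
  convert h5 using 1
  unfold Nf
  rw [show α - 4 - 1 = α - 5 by ring,
    show Real.sqrt (Aq x θ) ^ (α - 5) = Real.sqrt (Aq x θ) ^ (α - 6) * Real.sqrt (Aq x θ) from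
      by rw [rpow_shift1 hA]; congr 1; ring,
    show α - 4 = α - 6 + 2 by ring, ← rpow_merge (aq_nonneg x θ) h (α - 6)]
  set u := Real.sqrt (Aq x θ) with hu
  have hu2 : u ^ 2 = Aq x θ := Real.sq_sqrt (aq_nonneg x θ)
  rw [← hu2]
  have hrel : u ^ 2 = (x - Real.cos θ) ^ 2 + Real.sin θ ^ 2 := by rw [hu2]; exact aq_eq x θ
  have hune : u ≠ 0 := hA.ne'
  have hstep : (α-6+2) * (u ^ (α-6) * u) * (1/(2*u) * (2*x - 2*Real.cos θ))
      = (α-4) * u ^ (α-6) * (x - Real.cos θ) := by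
    field_simp; ring
  rw [hstep]
  have hκ : (α-2) * (((d:ℝ) + α - 5)/((d:ℝ)-1)) = (α-4) * (((d:ℝ) + α - 3)/((d:ℝ)-1)) + 2 := by
    field_simp; ring
  push_cast
  linear_combination (Real.sin θ ^ (d-2) * u ^ (α-6) * (x - Real.cos θ) * Real.sin θ ^ 2) * hκ
    + (-2 * Real.sin θ ^ (d-2) * u ^ (α-6) * (x - Real.cos θ)) * hrel

lemma hasDerivAt_psiI (hd : 4 ≤ d) (hα1 : 5 - (d:ℝ) ≤ α) (hα2 : α < 2) {r : ℝ} (hr : 0 < r) :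
    HasDerivAt (fun x => PsiI d α x) ((α - 2) * NI d α r) r := by
  have hd4 : (4:ℝ) ≤ (d:ℝ) := by exact_mod_cast hd
  have h := intervalIntegral.hasDerivAt_integral_of_dominated_loc_of_deriv_le
    (F := fun x θ => Psif d α x θ) (F' := fun x θ => (α - 2) * Nf d α x θ)
    (x₀ := r) (a := 0) (b := π) (μ := volume)
    (bound := fun _ => (2 - α) * (1 + ((d:ℝ)+α-5)/((d:ℝ)-1)))
    (s := Metric.ball r (r/2)) (Metric.ball_mem_nhds r (by positivity))
    (Filter.Eventually.of_forall (fun x => (psif_meas d α x).aestronglyMeasurable))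
    (psif_int hd hα1 hα2 hr)
    ((nf_meas d α r).const_mul (α-2)).aestronglyMeasurable
    ?_ (intervalIntegrable_const) ?_
  · have h2 := h.2
    have : (∫ θ in (0:ℝ)..π, (α - 2) * Nf d α r θ) = (α - 2) * NI d α r := by
      rw [intervalIntegral.integral_const_mul]; rfl
    rw [this] at h2
    exact h2
  · apply Filter.Eventually.of_forall
    intro θ hθ x hx
    have hx0 : 0 < x := by
      rw [Metric.mem_ball, Real.dist_eq, abs_lt] at hx
      linarith [hx.1]
    have hb := nf_bound hd hα1 hα2 hx0 hθ
    rw [norm_mul, Real.norm_eq_abs (α-2), abs_of_nonpos (by linarith : α - 2 ≤ 0)]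
    have : -(α-2) = 2 - α := by ring
    rw [this]
    exact mul_le_mul_of_nonneg_left hb (by linarith)
  · apply Filter.Eventually.of_forall
    intro θ hθ x hx
    have hx0 : 0 < x := by
      rw [Metric.mem_ball, Real.dist_eq, abs_lt] at hx
      linarith [hx.1]
    have hpos : 0 < Aq x θ := aq_pos_of_mem x hx0 (by rwa [Set.uIoc_of_le Real.pi_pos.le] at hθ)
    exact hasDerivAt_psif hd hpos

end Deriv


section EfPos

/-- the substituted integrand -/
def Ef (ν σ κ₂ C L x : ℝ) : ℝ :=
  C * (2*Real.cosh L - 2*Real.cosh x) ^ ν * (Real.exp (σ*x) - Real.exp ((σ-1)*x)) *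
    ((2*Real.cosh x - 2) + κ₂ * (2*Real.cosh L - 2*Real.cosh x))

lemma ef_cont {ν σ κ₂ C L : ℝ} (hν : 0 ≤ ν) : Continuous (Ef ν σ κ₂ C L) := by
  unfold Ef
  have h1 : Continuous fun x => (2*Real.cosh L - 2*Real.cosh x) ^ ν := by
    apply Continuous.rpow_const (by fun_prop)
    intro x; right; exact hν
  fun_prop

lemma ef_symm_sum {ν σ κ₂ C L : ℝ} (x : ℝ) :
    Ef ν σ κ₂ C L x + Ef ν σ κ₂ C L (-x) =
      C * (2*Real.cosh L - 2*Real.cosh x) ^ ν *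
        (2*Real.cosh (σ*x) - 2*Real.cosh ((σ-1)*x)) *
        ((2*Real.cosh x - 2) + κ₂ * (2*Real.cosh L - 2*Real.cosh x)) := by
  unfold Ef
  rw [Real.cosh_neg, show σ * -x = -(σ*x) by ring, show (σ-1) * -x = -((σ-1)*x) by ring,
    Real.cosh_eq (σ*x), Real.cosh_eq ((σ-1)*x), Real.exp_neg (σ*x), Real.exp_neg ((σ-1)*x)]
  have h1 : Real.exp (σ*x) ≠ 0 := Real.exp_ne_zero _
  have h2 : Real.exp ((σ-1)*x) ≠ 0 := Real.exp_ne_zero _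
  field_simp
  ring

lemma ef_integral_pos {ν σ κ₂ C L : ℝ} (hν : 0 ≤ ν) (hσ : 1 ≤ σ) (hκ : 0 ≤ κ₂)
    (hC : 0 < C) (hL : 0 < L) : 0 < ∫ x in (-L)..L, Ef ν σ κ₂ C L x := by
  have hEcont := ef_cont (σ := σ) (κ₂ := κ₂) (C := C) (L := L) hν
  have hint : ∀ a b : ℝ, IntervalIntegrable (Ef ν σ κ₂ C L) volume a b :=
    fun a b => hEcont.intervalIntegrable a b
  have hsplit : (∫ x in (-L)..(0:ℝ), Ef ν σ κ₂ C L x) + ∫ x in (0:ℝ)..L, Ef ν σ κ₂ C L x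
      = ∫ x in (-L)..L, Ef ν σ κ₂ C L x :=
    intervalIntegral.integral_add_adjacent_intervals (hint _ _) (hint _ _)
  have hneg : (∫ x in (0:ℝ)..L, Ef ν σ κ₂ C L (-x)) = ∫ x in (-L)..(0:ℝ), Ef ν σ κ₂ C L x := by
    have := intervalIntegral.integral_comp_neg (a := (0:ℝ)) (b := L) (f := Ef ν σ κ₂ C L)
    simpa using this
  have hadd : (∫ x in (0:ℝ)..L, (Ef ν σ κ₂ C L x + Ef ν σ κ₂ C L (-x)))
      = (∫ x in (0:ℝ)..L, Ef ν σ κ₂ C L x) + ∫ x in (0:ℝ)..L, Ef ν σ κ₂ C L (-x) :=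
    intervalIntegral.integral_add (hint _ _) ((hEcont.comp continuous_neg).intervalIntegrable _ _)
  have hpos : 0 < ∫ x in (0:ℝ)..L, (Ef ν σ κ₂ C L x + Ef ν σ κ₂ C L (-x)) := by
    apply intervalIntegral.intervalIntegral_pos_of_pos_on
    · exact (hint _ _).add ((hEcont.comp continuous_neg).intervalIntegrable _ _)
    · intro x hx
      rw [ef_symm_sum]
      have hx0 : 0 < x := hx.1
      have hD : 0 < 2*Real.cosh L - 2*Real.cosh x := by
        have : Real.cosh x < Real.cosh L := by
          rw [Real.cosh_lt_cosh, abs_of_pos hx0, abs_of_pos hL]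
          exact hx.2
        linarith
      have hDν : 0 < (2*Real.cosh L - 2*Real.cosh x) ^ ν := Real.rpow_pos_of_pos hD ν
      have hF : 0 < 2*Real.cosh (σ*x) - 2*Real.cosh ((σ-1)*x) := by
        have : Real.cosh ((σ-1)*x) < Real.cosh (σ*x) := by
          rw [Real.cosh_lt_cosh, abs_of_nonneg (mul_nonneg (by linarith) hx0.le),
            abs_of_pos (mul_pos (by linarith) hx0)]
          nlinarith
        linarith
      have hW : 0 < (2*Real.cosh x - 2) + κ₂ * (2*Real.cosh L - 2*Real.cosh x) := by
        have h1 : 1 < Real.cosh x := Real.one_lt_cosh.2 hx0.ne'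
        nlinarith
      positivity
    · exact hL
  rw [hadd] at hpos
  rw [← hsplit, ← hneg]
  linarith

end EfPos


section Subst

variable {d : ℕ} {α : ℝ}

lemma subst_pointwise (hd : 4 ≤ d) {r θ : ℝ} (h0 : 0 < r) (h1 : r < 1)
    (hθ : θ ∈ Set.Icc (0:ℝ) π) :
    Nf d α r θ = ((Aq r θ)⁻¹ * (2*r*Real.sin θ)) *
      Ef (((d:ℝ)-3)/2) (((d:ℝ)+α-3)/2) (((d:ℝ)+α-5)/((d:ℝ)-1))
        ((1 - r^2) ^ ((((d:ℝ)-3)/2) + (((d:ℝ)+α-3)/2) + 1) / (2*r) ^ (2*(((d:ℝ)-3)/2)+4))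
        (Real.log (1+r) - Real.log (1-r))
        (Real.log (Aq r θ) - Real.log (1-r^2)) := by
  have hd4 : (4:ℝ) ≤ (d:ℝ) := by exact_mod_cast hd
  have h1p : (0:ℝ) < 1 + r := by linarith
  have h1m : (0:ℝ) < 1 - r := by linarith
  have hm0 : (0:ℝ) < 1 - r^2 := by nlinarith
  have hP0 : 0 < Aq r θ := aq_pos_of_lt_one h0 h1 θ
  have hs0 : 0 ≤ Real.sin θ := Real.sin_nonneg_of_nonneg_of_le_pi hθ.1 hθ.2
  have h2r : (0:ℝ) < 2*r := by linarith
  unfold Nf Ef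
  set s := Real.sin θ with hsdef
  set t := Real.cos θ with htdef
  set P := Aq r θ with hPdef
  set m := 1 - r^2 with hmdef
  set ν := ((d:ℝ)-3)/2 with hνdef
  set σ := ((d:ℝ)+α-3)/2 with hσdef
  set κ2 := ((d:ℝ)+α-5)/((d:ℝ)-1) with hκdef
  have hs2 : s^2 = 1 - t^2 := by
    have h := Real.sin_sq_add_cos_sq θ
    rw [← hsdef, ← htdef] at h; linarith
  have hQne : (1 + r^2 - 2*r*t) ≠ 0 := by
    intro hc
    have : P = 0 := by rw [hPdef]; unfold Aq; rw [← htdef]; exact hc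
    exact hP0.ne' this
  have hMne : ((1:ℝ) - r^2) ≠ 0 := by nlinarith
  have hPt : P = 1 + r^2 - 2*r*t := by rw [hPdef]; unfold Aq; rw [htdef]
  have hcoshL : Real.cosh (Real.log (1+r) - Real.log (1-r))
      = ((1+r)/(1-r) + (1-r)/(1+r))/2 := by
    rw [Real.cosh_eq, Real.exp_sub, Real.exp_log h1p, Real.exp_log h1m, neg_sub,
      Real.exp_sub, Real.exp_log h1m, Real.exp_log h1p]
  have hcoshu : Real.cosh (Real.log P - Real.log m) = (P/m + m/P)/2 := by
    rw [Real.cosh_eq, Real.exp_sub, Real.exp_log hP0, Real.exp_log hm0, neg_sub,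
      Real.exp_sub, Real.exp_log hm0, Real.exp_log hP0]
  have hD : 2*Real.cosh (Real.log (1+r) - Real.log (1-r))
      - 2*Real.cosh (Real.log P - Real.log m) = 4*r^2*s^2/(m*P) := by
    rw [hcoshL, hcoshu, hs2, hPt, hmdef]
    field_simp [h1m.ne', h1p.ne', hQne, hMne]
    ring
  have hE2 : 2*Real.cosh (Real.log P - Real.log m) - 2 = 4*r^2*(r-t)^2/(m*P) := by
    rw [hcoshu, hPt, hmdef]
    field_simp [hQne, hMne]
    ring
  have hPm : 0 < P/m := div_pos hP0 hm0
  have hfac : Real.exp (σ*(Real.log P - Real.log m))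
      - Real.exp ((σ-1)*(Real.log P - Real.log m))
      = (P/m)^(σ-1) * (2*r*(r-t)/m) := by
    have e1 : Real.exp (σ*(Real.log P - Real.log m)) = (P/m)^σ := by
      rw [Real.rpow_def_of_pos hPm, Real.log_div hP0.ne' hm0.ne']
      congr 1; ring
    have e2 : Real.exp ((σ-1)*(Real.log P - Real.log m)) = (P/m)^(σ-1) := by
      rw [Real.rpow_def_of_pos hPm, Real.log_div hP0.ne' hm0.ne']
      congr 1; ring
    have e3 : (P/m)^σ = (P/m)^(σ-1)*(P/m) := by
      rw [← Real.rpow_add_one hPm.ne' (σ-1)]; congr 1; ring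
    rw [e1, e2, e3, hPt, hmdef]
    field_simp [hQne, hMne]
    ring
  rcases eq_or_lt_of_le hs0 with hs | hs
  · rw [← hs]
    simp [zero_pow (show d-2 ≠ 0 by omega)]
  · -- positive sine case
    have hsne : s ≠ 0 := hs.ne'
    have hDν : (2*Real.cosh (Real.log (1+r) - Real.log (1-r))
        - 2*Real.cosh (Real.log P - Real.log m)) ^ ν
        = ((2*r)^2/(m*P))^ν * s^(d-3) := by
      rw [hD, show 4*r^2*s^2/(m*P) = (2*r)^2/(m*P) * s^2 by ring,
        Real.mul_rpow (by positivity) (sq_nonneg s)]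
      congr 1
      have h22 : s^(2:ℕ) = s ^ ((2:ℝ)) := by
        rw [← Real.rpow_natCast s 2]; norm_num
      rw [h22, ← Real.rpow_mul hs0,
        show (2:ℝ)*ν = (((d:ℕ)-3:ℕ):ℝ) from by rw [cast_dsub hd (by norm_num), hνdef]; ring,
        Real.rpow_natCast]
    rw [hDν, hfac, hE2, hD]
    have hsq : 0 < Real.sqrt P := Real.sqrt_pos.2 hP0
    have hcancel : s^(d-2) * Real.sqrt P ^ (α-6)
        = (P⁻¹*(2*r*s)) * ((m ^ (ν+σ+1) / (2*r) ^ (2*ν+4)) * (((2*r)^2/(m*P))^ν * s^(d-3))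
          * ((P/m)^(σ-1) * (2*r/m)) * ((2*r)^2/(m*P))) := by
      have hq : (0:ℝ) < (2*r)^2/(m*P) := by positivity
      have hCpos : (0:ℝ) < m ^ (ν+σ+1) / (2*r) ^ (2*ν+4) :=
        div_pos (Real.rpow_pos_of_pos hm0 _) (Real.rpow_pos_of_pos h2r _)
      have hLpos : 0 < s^(d-2) * Real.sqrt P ^ (α-6) :=
        mul_pos (pow_pos hs _) (Real.rpow_pos_of_pos hsq _)
      have hX : (0:ℝ) < ((2*r)^2/(m*P))^ν * s^(d-3) :=
        mul_pos (Real.rpow_pos_of_pos hq _) (pow_pos hs _)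
      have hY : (0:ℝ) < (P/m)^(σ-1) * (2*r/m) :=
        mul_pos (Real.rpow_pos_of_pos hPm _) (div_pos h2r hm0)
      have hA : (0:ℝ) < P⁻¹*(2*r*s) := mul_pos (inv_pos.2 hP0) (mul_pos h2r hs)
      have hB : (0:ℝ) < (m ^ (ν+σ+1) / (2*r) ^ (2*ν+4)) * (((2*r)^2/(m*P))^ν * s^(d-3))
          * ((P/m)^(σ-1) * (2*r/m)) * ((2*r)^2/(m*P)) :=
        mul_pos (mul_pos (mul_pos hCpos hX) hY) hq
      have hRpos : (0:ℝ) < (P⁻¹*(2*r*s)) * ((m ^ (ν+σ+1) / (2*r) ^ (2*ν+4))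
          * (((2*r)^2/(m*P))^ν * s^(d-3)) * ((P/m)^(σ-1) * (2*r/m)) * ((2*r)^2/(m*P))) :=
        mul_pos hA hB
      have hlog : Real.log (s^(d-2) * Real.sqrt P ^ (α-6))
          = Real.log ((P⁻¹*(2*r*s)) * ((m ^ (ν+σ+1) / (2*r) ^ (2*ν+4))
            * (((2*r)^2/(m*P))^ν * s^(d-3)) * ((P/m)^(σ-1) * (2*r/m)) * ((2*r)^2/(m*P)))) := by
        rw [Real.log_mul (pow_ne_zero _ hsne) (Real.rpow_pos_of_pos hsq _).ne',
          Real.log_pow, Real.log_rpow hsq, Real.log_sqrt hP0.le,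
          Real.log_mul hA.ne' hB.ne',
          Real.log_mul (inv_ne_zero hP0.ne') (mul_pos h2r hs).ne',
          Real.log_inv, Real.log_mul h2r.ne' hsne,
          Real.log_mul (mul_pos (mul_pos hCpos hX) hY).ne' hq.ne',
          Real.log_mul (mul_pos hCpos hX).ne' hY.ne',
          Real.log_mul hCpos.ne' hX.ne',
          Real.log_div (Real.rpow_pos_of_pos hm0 (ν+σ+1)).ne'
            (Real.rpow_pos_of_pos h2r (2*ν+4)).ne',
          Real.log_rpow hm0, Real.log_rpow h2r,
          Real.log_mul (Real.rpow_pos_of_pos hq ν).ne' (pow_ne_zero _ hsne),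
          Real.log_rpow hq, Real.log_pow,
          Real.log_div (pow_ne_zero 2 h2r.ne') (mul_pos hm0 hP0).ne',
          Real.log_pow, Real.log_mul hm0.ne' hP0.ne',
          Real.log_mul (Real.rpow_pos_of_pos hPm _).ne' (div_pos h2r hm0).ne',
          Real.log_rpow hPm, Real.log_div hP0.ne' hm0.ne',
          Real.log_div h2r.ne' hm0.ne',
          cast_dsub hd (by norm_num : 2 ≤ 4), cast_dsub hd (by norm_num : 3 ≤ 4),
          hνdef, hσdef]
        push_cast
        ring
      calc s^(d-2) * Real.sqrt P ^ (α-6) = Real.exp (Real.log (s^(d-2) * Real.sqrt P ^ (α-6))) :=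
            (Real.exp_log hLpos).symm
        _ = Real.exp (Real.log ((P⁻¹*(2*r*s)) * ((m ^ (ν+σ+1) / (2*r) ^ (2*ν+4))
            * (((2*r)^2/(m*P))^ν * s^(d-3)) * ((P/m)^(σ-1) * (2*r/m)) * ((2*r)^2/(m*P))))) := by
            rw [hlog]
        _ = _ := Real.exp_log hRpos
    linear_combination ((r-t) * ((r-t)^2 + κ2*s^2)) * hcancel

end Subst


section NPos

variable {d : ℕ} {α : ℝ}

lemma nI_pos_of_ge_one (hd : 4 ≤ d) (hα1 : 5 - (d:ℝ) ≤ α) (hα2 : α < 2) {r : ℝ}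
    (hr : 1 ≤ r) : 0 < NI d α r := by
  have hr0 : 0 < r := by linarith
  apply intervalIntegral.intervalIntegral_pos_of_pos_on (nf_int hd hα1 hα2 hr0) _ Real.pi_pos
  intro θ hθ
  have hs : 0 < Real.sin θ := Real.sin_pos_of_pos_of_lt_pi hθ.1 hθ.2
  have hA : 0 < Real.sqrt (Aq r θ) := sqrtAq_pos_of_mem r hr0 ⟨hθ.1, hθ.2.le⟩
  have ht : Real.cos θ < 1 := by
    have := Real.strictAntiOn_cos (Set.mem_Icc.2 ⟨le_refl (0:ℝ), Real.pi_pos.le⟩)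
      (Set.mem_Icc.2 ⟨hθ.1.le, hθ.2.le⟩) hθ.1
    rwa [Real.cos_zero] at this
  have hrt : 0 < r - Real.cos θ := by linarith
  have hκ : 0 ≤ ((d:ℝ) + α - 5) / ((d:ℝ) - 1) := hkap2_nonneg hd hα1
  unfold Nf
  have hQ : 0 < (r - Real.cos θ)^2 + ((d:ℝ) + α - 5) / ((d:ℝ) - 1) * Real.sin θ^2 := by
    have := sq_nonneg (Real.sin θ)
    nlinarith
  have h1 : 0 < Real.sin θ ^ (d-2) := pow_pos hs _
  have h2 : 0 < Real.sqrt (Aq r θ) ^ (α-6) := Real.rpow_pos_of_pos hA _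
  positivity

lemma nI_pos_of_lt_one (hd : 4 ≤ d) (hα1 : 5 - (d:ℝ) ≤ α) (hα2 : α < 2) {r : ℝ}
    (h0 : 0 < r) (h1 : r < 1) : 0 < NI d α r := by
  have hd4 : (4:ℝ) ≤ (d:ℝ) := by exact_mod_cast hd
  have hm0 : (0:ℝ) < 1 - r^2 := by nlinarith
  have h1p : (0:ℝ) < 1 + r := by linarith
  have h1m : (0:ℝ) < 1 - r := by linarith
  have h2r : (0:ℝ) < 2*r := by linarith
  have hAq : ∀ θ, 0 < Aq r θ := aq_pos_of_lt_one h0 h1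
  have hν0 : (0:ℝ) ≤ ((d:ℝ)-3)/2 := by linarith
  have hσ1 : (1:ℝ) ≤ ((d:ℝ)+α-3)/2 := by linarith
  have hκ0 : (0:ℝ) ≤ ((d:ℝ)+α-5)/((d:ℝ)-1) := hkap2_nonneg hd hα1
  have hC0 : (0:ℝ) < (1 - r^2) ^ ((((d:ℝ)-3)/2) + (((d:ℝ)+α-3)/2) + 1)
      / (2*r) ^ (2*(((d:ℝ)-3)/2)+4) :=
    div_pos (Real.rpow_pos_of_pos hm0 _) (Real.rpow_pos_of_pos h2r _)
  have hL0 : (0:ℝ) < Real.log (1+r) - Real.log (1-r) :=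
    sub_pos.2 (Real.log_lt_log h1m (by linarith))
  have hEcont := ef_cont (σ := ((d:ℝ)+α-3)/2) (κ₂ := ((d:ℝ)+α-5)/((d:ℝ)-1))
    (C := (1 - r^2) ^ ((((d:ℝ)-3)/2) + (((d:ℝ)+α-3)/2) + 1) / (2*r) ^ (2*(((d:ℝ)-3)/2)+4))
    (L := Real.log (1+r) - Real.log (1-r)) hν0
  have huderiv : ∀ θ ∈ Set.uIcc (0:ℝ) π,
      HasDerivAt (fun θ => Real.log (Aq r θ) - Real.log (1-r^2))
        ((fun θ => (Aq r θ)⁻¹ * (2*r*Real.sin θ)) θ) θ := by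
    intro θ _
    have h := (Real.hasDerivAt_log (hAq θ).ne').comp θ (hasDerivAt_aq r θ)
    exact h.sub_const _
  have hu'cont : Continuous (fun θ => (Aq r θ)⁻¹ * (2*r*Real.sin θ)) := by
    apply Continuous.mul
    · exact Continuous.inv₀ (by unfold Aq; fun_prop) (fun θ => (hAq θ).ne')
    · fun_prop
  have hchange := intervalIntegral.integral_comp_smul_deriv huderiv hu'cont.continuousOn hEcont
  have hu0 : Real.log (Aq r 0) - Real.log (1-r^2)
      = -(Real.log (1+r) - Real.log (1-r)) := by
    have ha : Aq r 0 = (1-r)^2 := by unfold Aq; rw [Real.cos_zero]; ring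
    rw [ha, show (1:ℝ)-r^2 = (1-r)*(1+r) by ring, Real.log_pow,
      Real.log_mul h1m.ne' h1p.ne']
    push_cast; ring
  have huπ : Real.log (Aq r π) - Real.log (1-r^2)
      = Real.log (1+r) - Real.log (1-r) := by
    have ha : Aq r π = (1+r)^2 := by unfold Aq; rw [Real.cos_pi]; ring
    rw [ha, show (1:ℝ)-r^2 = (1-r)*(1+r) by ring, Real.log_pow,
      Real.log_mul h1m.ne' h1p.ne']
    push_cast; ring
  have hNI : NI d α r = ∫ x in (-(Real.log (1+r) - Real.log (1-r)))..(Real.log (1+r)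
      - Real.log (1-r)),
      Ef (((d:ℝ)-3)/2) (((d:ℝ)+α-3)/2) (((d:ℝ)+α-5)/((d:ℝ)-1))
        ((1 - r^2) ^ ((((d:ℝ)-3)/2) + (((d:ℝ)+α-3)/2) + 1) / (2*r) ^ (2*(((d:ℝ)-3)/2)+4))
        (Real.log (1+r) - Real.log (1-r)) x := by
    unfold NI
    rw [intervalIntegral.integral_congr (g := fun θ =>
      (fun θ => (Aq r θ)⁻¹ * (2*r*Real.sin θ)) θ •
        ((Ef (((d:ℝ)-3)/2) (((d:ℝ)+α-3)/2) (((d:ℝ)+α-5)/((d:ℝ)-1))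
          ((1 - r^2) ^ ((((d:ℝ)-3)/2) + (((d:ℝ)+α-3)/2) + 1) / (2*r) ^ (2*(((d:ℝ)-3)/2)+4))
          (Real.log (1+r) - Real.log (1-r))) ∘
          (fun θ => Real.log (Aq r θ) - Real.log (1-r^2))) θ) ?_]
    · rw [hchange, hu0, huπ]
    · intro θ hθ
      rw [Set.uIcc_of_le Real.pi_pos.le] at hθ
      have h := subst_pointwise (α := α) hd h0 h1 hθ
      simpa [Function.comp, smul_eq_mul] using h
  rw [hNI]
  exact ef_integral_pos hν0 hσ1 hκ0 hC0 hL0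

lemma nI_pos (hd : 4 ≤ d) (hα1 : 5 - (d:ℝ) ≤ α) (hα2 : α < 2) {r : ℝ}
    (hr : 0 < r) : 0 < NI d α r := by
  rcases lt_or_ge r 1 with h | h
  · exact nI_pos_of_lt_one hd hα1 hα2 hr h
  · exact nI_pos_of_ge_one hd hα1 hα2 h

end NPos


theorem stmt4 (d : ℕ) (hd : 4 ≤ d) (α : ℝ) (hα1 : 5 - (d : ℝ) ≤ α) (hα2 : α < 2)
    (φ : ℝ → ℝ)
    (hφ : ∀ r : ℝ, φ r = sphereArea (d - 1) / sphereArea d *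
      ∫ θ in (0:ℝ)..Real.pi,
        (r - Real.cos θ) * (Real.sin θ) ^ (d - 2) *
          (Real.sqrt (1 + r ^ 2 - 2 * r * Real.cos θ)) ^ (α - 2)) :
    StrictAntiOn (fun r => φ r / r) (Set.Ioi 0) := by
  have hd4 : (4:ℝ) ≤ (d:ℝ) := by exact_mod_cast hd
  set c := sphereArea (d - 1) / sphereArea d with hcdef
  have hc0 : 0 < c := by
    rw [hcdef]
    unfold sphereArea
    have hg1 : 0 < Real.Gamma (((d-1:ℕ):ℝ)/2) := by
      apply Real.Gamma_pos_of_pos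
      rw [cast_dsub hd (by norm_num)]
      linarith
    have hg2 : 0 < Real.Gamma (((d:ℕ):ℝ)/2) := by
      apply Real.Gamma_pos_of_pos
      linarith
    have hp1 : (0:ℝ) < 2 * Real.pi ^ (((d-1:ℕ):ℝ)/2) := by positivity
    have hp2 : (0:ℝ) < 2 * Real.pi ^ (((d:ℕ):ℝ)/2) := by positivity
    exact div_pos (div_pos hp1 hg1) (div_pos hp2 hg2)
  have hψ : ∀ x ∈ Set.Ioi (0:ℝ), φ x / x = c * PsiI d α x := by
    intro x hx
    have hx0 : 0 < x := hx
    rw [hφ x]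
    have hXf : (∫ θ in (0:ℝ)..Real.pi,
        (x - Real.cos θ) * (Real.sin θ) ^ (d - 2) *
          (Real.sqrt (1 + x ^ 2 - 2 * x * Real.cos θ)) ^ (α - 2))
        = ∫ θ in (0:ℝ)..π, Xf d α x θ := rfl
    rw [hXf, xi_eq_r_psiI hd hα1 hα2 hx0]
    field_simp
  apply strictAntiOn_of_deriv_neg (convex_Ioi 0)
  · intro x hx
    have hx0 : 0 < x := hx
    apply ContinuousAt.continuousWithinAt
    have hcont : ContinuousAt (fun r => c * PsiI d α r) x :=
      ((hasDerivAt_psiI hd hα1 hα2 hx0).continuousAt).const_mul c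
    apply hcont.congr
    filter_upwards [IsOpen.mem_nhds isOpen_Ioi hx] with y hy
    exact (hψ y hy).symm
  · intro x hx
    rw [interior_Ioi] at hx
    have hx0 : 0 < x := hx
    have hD : HasDerivAt (fun r => φ r / r) (c * ((α-2) * NI d α x)) x := by
      have h1 : HasDerivAt (fun r => c * PsiI d α r) (c * ((α-2) * NI d α x)) x :=
        (hasDerivAt_psiI hd hα1 hα2 hx0).const_mul c
      apply h1.congr_of_eventuallyEq
      filter_upwards [IsOpen.mem_nhds isOpen_Ioi hx] with y hy
      exact hψ y hy
    rw [hD.deriv]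
    have hN := nI_pos hd hα1 hα2 hx0
    have h2 : α - 2 < 0 := by linarith
    have : (α-2) * NI d α x < 0 := mul_neg_of_neg_of_pos h2 hN
    exact mul_neg_of_pos_of_neg hc0 this

end AggrProof
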